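/- A FIFO-ordered lock with non-preemptible critical sections on an m-core system provides a worst-case waiting time of (m-1) times the worst-case critical-section duration. Formally: under the core-injectivity hypothesis with waiter set W, holder h ∉ W, and a duration function d : T → ℝ with 0 ≤ d σ ≤ C for every task σ, a waiter τ ∈ W that must wait for the holder and for every other waiter in W waits at most d h + Σ_{σ ∈ W \ {τ}} d σ ≤ (m - 1) · C. -/
import Mathlib


/-- A FIFO-ordered lock with non-preemptible critical sections on an `m`-core
system provides a worst-case waiting time of `(m - 1)` times the worst-case
critical-section duration: a waiter `τ ∈ W` that must wait for the holder and
for every other current waiter waits at most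
`d h + ∑ σ ∈ W \ {τ}, d σ ≤ (m - 1) * C`. -/
theorem fifo_waiting_time_bound (m : ℕ) (hm : 2 ≤ m) (T : Type*) [DecidableEq T]
    (core : T → Fin m) (W : Finset T) (h : T) (hhW : h ∉ W)
    (hinj : Set.InjOn core (↑W ∪ {h}))
    (C : ℝ) (hC : 0 ≤ C) (d : T → ℝ)
    (hd : ∀ σ, 0 ≤ d σ ∧ d σ ≤ C)
    (τ : T) (hτ : τ ∈ W) :
    d h + ∑ σ ∈ W.erase τ, d σ ≤ ((m : ℝ) - 1) * C := by
  have hcard : (insert h W).card ≤ m := by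
    have : (insert h W).card ≤ (Finset.univ : Finset (Fin m)).card := by
      apply Finset.card_le_card_of_injOn core (fun _ _ => Finset.mem_univ _)
      intro a ha b hb hab
      apply hinj _ _ hab
      · simp only [Finset.coe_insert] at ha
        rcases ha with rfl | ha
        · exact Or.inr rfl
        · exact Or.inl ha
      · simp only [Finset.coe_insert] at hb
        rcases hb with rfl | hb
        · exact Or.inr rfl
        · exact Or.inl hb
    simpa using this
  have hWcard : W.card + 1 ≤ m := by
    rwa [Finset.card_insert_of_notMem hhW] at hcard
  have herase : (W.erase τ).card = W.card - 1 := Finset.card_erase_of_mem hτ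
  have hWpos : 1 ≤ W.card := Finset.card_pos.mpr ⟨τ, hτ⟩
  have hsum : ∑ σ ∈ W.erase τ, d σ ≤ ((W.erase τ).card : ℝ) * C := by
    calc ∑ σ ∈ W.erase τ, d σ ≤ ∑ _σ ∈ W.erase τ, C :=
          Finset.sum_le_sum fun σ _ => (hd σ).2
      _ = ((W.erase τ).card : ℝ) * C := by rw [Finset.sum_const, nsmul_eq_mul]
  have hb : ((W.erase τ).card : ℝ) ≤ (m : ℝ) - 2 := by
    rw [herase]
    have : W.card - 1 + 2 ≤ m := by omega
    have := Nat.cast_le (α := ℝ).mpr this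
    push_cast at this
    linarith
  have hdh : d h ≤ C := (hd h).2
  nlinarith [hsum, hb, hC, hdh]
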